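/- Let M_red and M_blue be disjoint connected matchings (red and blue respectively) in a 2-coloured 3-uniform hypergraph K on t vertices that together maximize the number of covered vertices, and let δ ∈ (0, 1/20). Suppose u ∈ V_blue and v, w ∈ V_red with uvw ∈ M_blue, where V_blue and V_red are vertex sets such that: every vertex of V_blue has ≥ (1-δ)t shadow-neighbours in the blue component B ⊇ M_blue, every vertex of V_red has ≥ (1-δ)t shadow-neighbours in the red component R ⊇ M_red, all pairs among covered/uncovered vertices appearing are active with codegree ≥ (1-δ)t, and the set V'_red of uncovered vertices in V_red has size ≥ 8δt. Then a contradiction follows; hence no edge of M_blue has exactly one vertex in V_blue. -/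

import Mathlib

open Finset
open scoped Classical

/-- Pseudo-path connectivity of edges inside `G`. -/
def PseudoConn {V : Type*} [DecidableEq V] (G : Finset (Finset V))
    (e f : Finset V) : Prop :=
  ∃ p : List (Finset V), p ≠ [] ∧ p.head? = some e ∧ p.getLast? = some f ∧
    (∀ g ∈ p, g ∈ G) ∧ p.Chain' (fun a b => (a ∩ b).card = 2)

/-- `C` is a connected component of `G`. -/
def IsComponent {V : Type*} [DecidableEq V] (G C : Finset (Finset V)) : Prop :=
  ∃ e ∈ G, C = G.filter (fun f => PseudoConn G e f)

/-- A matching: pairwise disjoint edges. -/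
def IsMatching {V : Type*} [DecidableEq V] (M : Finset (Finset V)) : Prop :=
  ∀ e ∈ M, ∀ f ∈ M, e ≠ f → Disjoint e f

/-- Shadow neighbourhood `N_C(x)`. -/
noncomputable def shadowNbhd {V : Type*} [Fintype V] [DecidableEq V]
    (C : Finset (Finset V)) (x : V) : Finset V :=
  Finset.univ.filter (fun y => y ≠ x ∧ ∃ e ∈ C, x ∈ e ∧ y ∈ e)

/-- Codegree set `N_K(x,y)`. -/
noncomputable def codegSet {V : Type*} [Fintype V] [DecidableEq V]
    (K : Finset (Finset V)) (x y : V) : Finset V :=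
  Finset.univ.filter (fun z => ({x, y, z} : Finset V) ∈ K)

lemma comp_closed {V : Type*} [DecidableEq V] {G C f g : Finset V → Prop} : True := trivial

lemma comp_closed' {V : Type*} [DecidableEq V] {G C : Finset (Finset V)} {f g : Finset V}
    (hC : IsComponent G C) (hg : g ∈ C) (hf : f ∈ G) (h2 : (g ∩ f).card = 2) : f ∈ C := by
  obtain ⟨e0, he0, rfl⟩ := hC
  rw [Finset.mem_filter] at hg ⊢
  obtain ⟨hgG, p, hne, hhd, hlast, hmem, hchain⟩ := hg
  refine ⟨hf, p ++ [f], by simp, ?_, by simp, ?_, ?_⟩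
  · rw [List.head?_append]
    cases p with
    | nil => exact absurd rfl hne
    | cons a l => simpa using hhd
  · intro x hx
    rcases List.mem_append.mp hx with h | h
    · exact hmem x h
    · simp at h; subst h; exact hf
  · unfold List.Chain'; rw [List.isChain_append]
    refine ⟨hchain, List.isChain_singleton _, ?_⟩
    intro x hx y hy
    simp at hy; subst hy
    rw [hlast] at hx; simp at hx; subst hx
    exact h2

lemma triple_distinct {V : Type*} [DecidableEq V] {x y z : V}
    (h : ({x, y, z} : Finset V).card = 3) : x ≠ y ∧ x ≠ z ∧ y ≠ z := by
  refine ⟨?_, ?_, ?_⟩ <;> intro h' <;> subst h'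
  · have hsub : ({x, x, z} : Finset V) ⊆ {x, z} := by intro t ht; simp at ht ⊢; tauto
    have h1 := Finset.card_le_card hsub
    have h2 : ({x, z} : Finset V).card ≤ 2 := (Finset.card_insert_le _ _).trans (by simp)
    omega
  · have hsub : ({x, y, x} : Finset V) ⊆ {x, y} := by intro t ht; simp at ht ⊢; tauto
    have h1 := Finset.card_le_card hsub
    have h2 : ({x, y} : Finset V).card ≤ 2 := (Finset.card_insert_le _ _).trans (by simp)
    omega
  · have hsub : ({x, y, y} : Finset V) ⊆ {x, y} := by intro t ht; simp at ht ⊢; tauto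
    have h1 := Finset.card_le_card hsub
    have h2 : ({x, y} : Finset V).card ≤ 2 := (Finset.card_insert_le _ _).trans (by simp)
    omega

lemma inter_two {V : Type*} [DecidableEq V] {f g : Finset V} {x y : V}
    (hf : f.card = 3) (hg : g.card = 3) (hxy : x ≠ y)
    (hxf : x ∈ f) (hxg : x ∈ g) (hyf : y ∈ f) (hyg : y ∈ g) (hne : f ≠ g) :
    (g ∩ f).card = 2 := by
  have hsub : ({x, y} : Finset V) ⊆ g ∩ f := by
    intro t ht; simp at ht; rcases ht with rfl | rfl <;> simp [hxf, hxg, hyf, hyg]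
  have h2 : 2 ≤ (g ∩ f).card := by
    have := Finset.card_le_card hsub
    rwa [Finset.card_pair hxy] at this
  have h3' : (g ∩ f).card ≤ 3 := (Finset.card_le_card (Finset.inter_subset_left)).trans hg.le
  rcases Nat.lt_or_ge (g ∩ f).card 3 with h | h
  · omega
  · exfalso
    have heq : g ∩ f = g := Finset.eq_of_subset_of_card_le Finset.inter_subset_left (by omega)
    have : g ⊆ f := heq ▸ Finset.inter_subset_right
    exact hne (Finset.eq_of_subset_of_card_le this (by omega)).symm

lemma mem_comp_of_pair {V : Type*} [DecidableEq V] {G C : Finset (Finset V)} {f g : Finset V}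
    {x y : V} (hC : IsComponent G C) (hg : g ∈ C) (hf : f ∈ G)
    (hfc : f.card = 3) (hgc : g.card = 3) (hxy : x ≠ y)
    (hxf : x ∈ f) (hxg : x ∈ g) (hyf : y ∈ f) (hyg : y ∈ g) : f ∈ C := by
  by_cases h : f = g
  · exact h ▸ hg
  · exact comp_closed' hC hg hf (inter_two hfc hgc hxy hxf hxg hyf hyg h)

lemma real_inter_lower {V : Type*} [Fintype V] [DecidableEq V] (A B : Finset V) :
    ((A ∩ B).card : ℝ) ≥ A.card + B.card - (Fintype.card V) := by
  have h1 := Finset.card_union_add_card_inter A B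
  have h2 : (A ∪ B).card ≤ Fintype.card V := (Finset.card_le_univ _).trans_eq Finset.card_univ
  have h1' : ((A ∪ B).card : ℝ) + (A ∩ B).card = A.card + B.card := by exact_mod_cast h1
  have h2' : ((A ∪ B).card : ℝ) ≤ Fintype.card V := by exact_mod_cast h2
  linarith


set_option maxHeartbeats 1000000 in
/-- In the maximal pair `(M_red, M_blue)` of disjoint red/blue connected
matchings (in a red component `R` and a blue component `B` of a 2-coloured 3-uniform
hypergraph `K` on `t` vertices, `0 < δ < 1/20`), with `V_blue` vertices having `(1-δ)t`
shadow-neighbours in `B`, `V_red` vertices having `(1-δ)t` shadow-neighbours in `R`,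
every active pair of `K` of codegree at least `(1-δ)t`, every pair of vertices active,
and the set `V'_red` of uncovered vertices of `V_red` of size at least `8δt`, no edge of
`M_blue` has exactly one vertex in `V_blue` (and its other two vertices in `V_red`). -/
theorem no_blue_edge_with_one_Vblue_vertex {V : Type*} [Fintype V] [DecidableEq V]
    (δ : ℝ) (hδ0 : 0 < δ) (hδ1 : δ < 1 / 20)
    (t : ℕ) (ht : t = Fintype.card V)
    (K Kred Kblue : Finset (Finset V))
    (h3 : ∀ e ∈ K, e.card = 3)
    (hunion : Kred ∪ Kblue = K) (hdisj : Disjoint Kred Kblue)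
    (R B : Finset (Finset V))
    (hR : IsComponent Kred R) (hB : IsComponent Kblue B)
    (Mred Mblue : Finset (Finset V))
    (hMred : Mred ⊆ R) (hMblue : Mblue ⊆ B)
    (hMatch : IsMatching (Mred ∪ Mblue))
    (hmax : ∀ Mr' Mb' : Finset (Finset V), Mr' ⊆ R → Mb' ⊆ B →
      IsMatching (Mr' ∪ Mb') →
      ((Mr' ∪ Mb').biUnion id).card ≤ ((Mred ∪ Mblue).biUnion id).card)
    (Vred Vblue : Finset V) (hVdisj : Disjoint Vred Vblue)
    (hVblue : ∀ x ∈ Vblue, ((shadowNbhd B x).card : ℝ) ≥ (1 - δ) * t)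
    (hVred : ∀ x ∈ Vred, ((shadowNbhd R x).card : ℝ) ≥ (1 - δ) * t)
    (hactive : ∀ x y : V, x ≠ y → (codegSet K x y).Nonempty)
    (hcodeg : ∀ x y : V, x ≠ y → (codegSet K x y).Nonempty →
      ((codegSet K x y).card : ℝ) ≥ (1 - δ) * t)
    (hVred' : (((Vred.filter (fun x => x ∉ (Mred ∪ Mblue).biUnion id)).card : ℝ)
      ≥ 8 * δ * t)) :
    ∀ e ∈ Mblue, ¬ ((e.filter (fun v => v ∈ Vblue)).card = 1 ∧
      (e.filter (fun v => v ∈ Vred)).card = 2) := by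
  intro e he
  rintro ⟨h1, h2⟩
  classical
  set M : Finset (Finset V) := Mred ∪ Mblue with hM
  set U : Finset V := M.biUnion id with hUdef
  set V' : Finset V := Vred.filter (fun x => x ∉ U) with hV'def
  -- basic inclusions
  have hRsub : R ⊆ Kred := by obtain ⟨e0, _, rfl⟩ := hR; exact Finset.filter_subset _ _
  have hBsub : B ⊆ Kblue := by obtain ⟨e0, _, rfl⟩ := hB; exact Finset.filter_subset _ _
  have hKredK : Kred ⊆ K := hunion ▸ Finset.subset_union_left
  have hKblueK : Kblue ⊆ K := hunion ▸ Finset.subset_union_right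
  have heM : e ∈ M := Finset.mem_union_right _ he
  have heB : e ∈ B := hMblue he
  have heK : e ∈ K := hKblueK (hBsub heB)
  have hecard : e.card = 3 := h3 e heK
  -- decompose e
  obtain ⟨u, hfb⟩ := Finset.card_eq_one.mp h1
  obtain ⟨v, w, hvw, hfr⟩ := Finset.card_eq_two.mp h2
  have humem := Finset.mem_filter.mp (hfb ▸ Finset.mem_singleton_self u)
  have hu_e : u ∈ e := humem.1
  have hu_blue : u ∈ Vblue := humem.2
  have hvmem := Finset.mem_filter.mp (hfr ▸ Finset.mem_insert_self v {w})
  have hv_e : v ∈ e := hvmem.1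
  have hv_red : v ∈ Vred := hvmem.2
  have hwmem := Finset.mem_filter.mp
    (hfr ▸ Finset.mem_insert_of_mem (Finset.mem_singleton_self w))
  have hw_e : w ∈ e := hwmem.1
  have hw_red : w ∈ Vred := hwmem.2
  have huv : u ≠ v := fun h => Finset.disjoint_left.mp hVdisj hv_red (h ▸ hu_blue)
  have huw : u ≠ w := fun h => Finset.disjoint_left.mp hVdisj hw_red (h ▸ hu_blue)
  have he_eq : e = {u, v, w} := by
    have hdisjF : Disjoint (e.filter (fun x => x ∈ Vblue)) (e.filter (fun x => x ∈ Vred)) := by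
      rw [Finset.disjoint_left]
      intro x hx hx'
      exact Finset.disjoint_left.mp hVdisj (Finset.mem_filter.mp hx').2 (Finset.mem_filter.mp hx).2
    have hsub : (e.filter (fun x => x ∈ Vblue)) ∪ (e.filter (fun x => x ∈ Vred)) ⊆ e :=
      Finset.union_subset (Finset.filter_subset _ _) (Finset.filter_subset _ _)
    have hcard' : ((e.filter (fun x => x ∈ Vblue)) ∪ (e.filter (fun x => x ∈ Vred))).card = 3 := by
      rw [Finset.card_union_of_disjoint hdisjF, h1, h2]
    have heq := Finset.eq_of_subset_of_card_le hsub (by rw [hcard', hecard])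
    rw [← heq, hfb, hfr]
    ext x; simp; tauto
  have he_sub : ∀ x ∈ e, x = u ∨ x = v ∨ x = w := by
    intro x hx; rw [he_eq] at hx; simpa using hx
  -- covered vertices
  have hu_U : u ∈ U := Finset.mem_biUnion.mpr ⟨e, heM, hu_e⟩
  have hv_U : v ∈ U := Finset.mem_biUnion.mpr ⟨e, heM, hv_e⟩
  have hw_U : w ∈ U := Finset.mem_biUnion.mpr ⟨e, heM, hw_e⟩
  have huniq : ∀ f ∈ M, ∀ x, x ∈ e → x ∈ f → f = e := by
    intro f hf x hx hxf
    by_contra hne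
    exact (Finset.disjoint_left.mp (hMatch f hf e heM hne) hxf) hx
  -- t facts
  have ht3 : 3 ≤ t := by
    have h := (Finset.card_le_univ e).trans_eq Finset.card_univ
    omega
  have htpos : (0 : ℝ) < t := by exact_mod_cast Nat.lt_of_lt_of_le (by norm_num) ht3
  have hδt : 1 ≤ δ * t := by
    have hs := hVblue u hu_blue
    have hsubN : shadowNbhd B u ⊆ Finset.univ.erase u := by
      intro y hy
      rw [shadowNbhd, Finset.mem_filter] at hy
      exact Finset.mem_erase.mpr ⟨hy.2.1, Finset.mem_univ y⟩
    have hc1 : (shadowNbhd B u).card ≤ t - 1 := by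
      have h := Finset.card_le_card hsubN
      rw [Finset.card_erase_of_mem (Finset.mem_univ u), Finset.card_univ] at h
      omega
    have hc1' : ((shadowNbhd B u).card : ℝ) ≤ (t : ℝ) - 1 := by
      have h1' : ((shadowNbhd B u).card : ℝ) ≤ ((t - 1 : ℕ) : ℝ) := Nat.cast_le.mpr hc1
      have h2' : ((t - 1 : ℕ) : ℝ) = (t : ℝ) - 1 := by
        rw [Nat.cast_sub (by omega : 1 ≤ t)]; norm_num
      linarith
    nlinarith
  have hV'card : ((V'.card : ℝ)) ≥ 8 * δ * t := hVred'
  -- helper for set difference cardinality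
  have hsdiff : ∀ S T : Finset V, ((S \ T).card : ℝ) ≥ (S.card : ℝ) - T.card := by
    intro S T
    have h1 : (S \ T).card + T.card = (S ∪ T).card := Finset.card_sdiff_add_card S T
    have h2 : S.card ≤ (S ∪ T).card := Finset.card_le_card Finset.subset_union_left
    have h1' : ((S \ T).card : ℝ) + T.card = ((S ∪ T).card : ℝ) := by exact_mod_cast h1
    have h2' : ((S.card : ℝ)) ≤ ((S ∪ T).card : ℝ) := by exact_mod_cast h2
    linarith
  -- pick a
  have hS1 : (shadowNbhd B u ∩ V').Nonempty := by
    rw [← Finset.card_pos]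
    have hlow := real_inter_lower (shadowNbhd B u) V'
    rw [← ht] at hlow
    have hs := hVblue u hu_blue
    have : (0 : ℝ) < (((shadowNbhd B u ∩ V').card : ℝ)) := by nlinarith
    exact_mod_cast this
  obtain ⟨a, ha⟩ := hS1
  obtain ⟨haN, haV'⟩ := Finset.mem_inter.mp ha
  rw [shadowNbhd, Finset.mem_filter] at haN
  obtain ⟨-, hau, e', he'B, hu_e', ha_e'⟩ := haN
  obtain ⟨ha_red, ha_nU⟩ := Finset.mem_filter.mp haV'
  have hua : u ≠ a := hau.symm
  -- pick b
  have hS2 : (codegSet K u a ∩ (shadowNbhd R a ∩ V')).Nonempty := by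
    rw [← Finset.card_pos]
    have hlow1 := real_inter_lower (codegSet K u a) (shadowNbhd R a ∩ V')
    have hlow2 := real_inter_lower (shadowNbhd R a) V'
    rw [← ht] at hlow1 hlow2
    have hs1 := hcodeg u a hua (hactive u a hua)
    have hs2 := hVred a ha_red
    have : (0 : ℝ) < (((codegSet K u a ∩ (shadowNbhd R a ∩ V')).card : ℝ)) := by nlinarith
    exact_mod_cast this
  obtain ⟨b, hb⟩ := hS2
  obtain ⟨hbC, hbI⟩ := Finset.mem_inter.mp hb
  obtain ⟨hbN, hbV'⟩ := Finset.mem_inter.mp hbI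
  rw [codegSet, Finset.mem_filter] at hbC
  have he1K : ({u, a, b} : Finset V) ∈ K := hbC.2
  rw [shadowNbhd, Finset.mem_filter] at hbN
  obtain ⟨-, hba, e'', he''R, ha_e'', hb_e''⟩ := hbN
  obtain ⟨hb_red, hb_nU⟩ := Finset.mem_filter.mp hbV'
  have hcard1 : ({u, a, b} : Finset V).card = 3 := h3 _ he1K
  obtain ⟨-, hub, hab⟩ := triple_distinct hcard1
  -- pick c
  have hS3 : ((codegSet K v w ∩ (shadowNbhd R v ∩ V')) \ {a, b}).Nonempty := by
    rw [← Finset.card_pos]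
    have hlow1 := real_inter_lower (codegSet K v w) (shadowNbhd R v ∩ V')
    have hlow2 := real_inter_lower (shadowNbhd R v) V'
    rw [← ht] at hlow1 hlow2
    have hs1 := hcodeg v w hvw (hactive v w hvw)
    have hs2 := hVred v hv_red
    have hsd := hsdiff (codegSet K v w ∩ (shadowNbhd R v ∩ V')) {a, b}
    have hpair : (({a, b} : Finset V).card : ℝ) ≤ 2 := by
      have h2 : ({a, b} : Finset V).card ≤ 2 := (Finset.card_insert_le _ _).trans (by simp)
      exact_mod_cast h2
    have : (0 : ℝ) <
        ((((codegSet K v w ∩ (shadowNbhd R v ∩ V')) \ {a, b}).card : ℝ)) := by nlinarith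
    exact_mod_cast this
  obtain ⟨c, hc⟩ := hS3
  obtain ⟨hcI, hc_ab⟩ := Finset.mem_sdiff.mp hc
  obtain ⟨hcC, hcI2⟩ := Finset.mem_inter.mp hcI
  obtain ⟨hcN, hcV'⟩ := Finset.mem_inter.mp hcI2
  rw [codegSet, Finset.mem_filter] at hcC
  have he2K : ({v, w, c} : Finset V) ∈ K := hcC.2
  rw [shadowNbhd, Finset.mem_filter] at hcN
  obtain ⟨-, hcv, e''', he'''R, hv_e''', hc_e'''⟩ := hcN
  obtain ⟨hc_red, hc_nU⟩ := Finset.mem_filter.mp hcV'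
  have hca : c ≠ a := by simp at hc_ab; exact hc_ab.1
  have hcb : c ≠ b := by simp at hc_ab; exact hc_ab.2
  have hcard2 : ({v, w, c} : Finset V).card = 3 := h3 _ he2K
  obtain ⟨-, hvc, hwc⟩ := triple_distinct hcard2
  -- more distinctness: a,b,c are uncovered, u,v,w covered
  have hax : ∀ x : V, x ∈ U → a ≠ x := fun x hx h => ha_nU (h ▸ hx)
  have hbx : ∀ x : V, x ∈ U → b ≠ x := fun x hx h => hb_nU (h ▸ hx)
  have hcx : ∀ x : V, x ∈ U → c ≠ x := fun x hx h => hc_nU (h ▸ hx)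
  -- the two new edges
  set e1 : Finset V := {u, a, b} with he1def
  set e2 : Finset V := {v, w, c} with he2def
  have hu_e1 : u ∈ e1 := by rw [he1def]; simp
  have ha_e1 : a ∈ e1 := by rw [he1def]; simp
  have hb_e1 : b ∈ e1 := by rw [he1def]; simp
  have hv_e2 : v ∈ e2 := by rw [he2def]; simp
  have hw_e2 : w ∈ e2 := by rw [he2def]; simp
  have hc_e2 : c ∈ e2 := by rw [he2def]; simp
  -- e1, e2 lie in R or B
  have he1RB : e1 ∈ R ∨ e1 ∈ B := by
    have hm : e1 ∈ Kred ∪ Kblue := by rw [hunion]; exact he1K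
    rcases Finset.mem_union.mp hm with hred | hblue
    · exact Or.inl (mem_comp_of_pair hR he''R hred hcard1
        (h3 _ (hKredK (hRsub he''R))) hab ha_e1 ha_e'' hb_e1 hb_e'')
    · exact Or.inr (mem_comp_of_pair hB he'B hblue hcard1
        (h3 _ (hKblueK (hBsub he'B))) hua hu_e1 hu_e' ha_e1 ha_e')
  have he2RB : e2 ∈ R ∨ e2 ∈ B := by
    have hm : e2 ∈ Kred ∪ Kblue := by rw [hunion]; exact he2K
    rcases Finset.mem_union.mp hm with hred | hblue
    · exact Or.inl (mem_comp_of_pair hR he'''R hred hcard2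
        (h3 _ (hKredK (hRsub he'''R))) hvc hv_e2 hv_e''' hc_e2 hc_e''')
    · exact Or.inr (mem_comp_of_pair hB heB hblue hcard2 hecard hvw hv_e2 hv_e hw_e2 hw_e)
  -- disjointness of new edges
  have hde1e2 : Disjoint e1 e2 := by
    rw [Finset.disjoint_left]
    intro x hx hx'
    rw [he1def] at hx; rw [he2def] at hx'
    simp at hx hx'
    rcases hx with h1 | h1 | h1 <;> rcases hx' with h2 | h2 | h2
    · exact huv (h1.symm.trans h2)
    · exact huw (h1.symm.trans h2)
    · exact hcx u hu_U (h1.symm.trans h2).symm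
    · exact hax v hv_U (h1.symm.trans h2)
    · exact hax w hw_U (h1.symm.trans h2)
    · exact hca (h1.symm.trans h2).symm
    · exact hbx v hv_U (h1.symm.trans h2)
    · exact hbx w hw_U (h1.symm.trans h2)
    · exact hcb (h1.symm.trans h2).symm
  have hd1 : ∀ f ∈ M, f ≠ e → Disjoint e1 f := by
    intro f hf hfe
    rw [Finset.disjoint_left]
    intro x hx hxf
    rw [he1def] at hx; simp at hx
    rcases hx with rfl | rfl | rfl
    · exact hfe (huniq f hf x hu_e hxf)
    · exact ha_nU (Finset.mem_biUnion.mpr ⟨f, hf, hxf⟩)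
    · exact hb_nU (Finset.mem_biUnion.mpr ⟨f, hf, hxf⟩)
  have hd2 : ∀ f ∈ M, f ≠ e → Disjoint e2 f := by
    intro f hf hfe
    rw [Finset.disjoint_left]
    intro x hx hxf
    rw [he2def] at hx; simp at hx
    rcases hx with rfl | rfl | rfl
    · exact hfe (huniq f hf x hv_e hxf)
    · exact hfe (huniq f hf x hw_e hxf)
    · exact hc_nU (Finset.mem_biUnion.mpr ⟨f, hf, hxf⟩)
  -- the new edge set
  set M'' : Finset (Finset V) := insert e1 (insert e2 (M.erase e)) with hM''def
  have hM'' : IsMatching M'' := by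
    intro f hf g hg hne
    rw [hM''def] at hf hg
    simp only [Finset.mem_insert, Finset.mem_erase] at hf hg
    rcases hf with rfl | rfl | ⟨hfe, hfM⟩ <;> rcases hg with rfl | rfl | ⟨hge, hgM⟩
    · exact absurd rfl hne
    · exact hde1e2
    · exact hd1 _ hgM hge
    · exact hde1e2.symm
    · exact absurd rfl hne
    · exact hd2 _ hgM hge
    · exact (hd1 _ hfM hfe).symm
    · exact (hd2 _ hfM hfe).symm
    · exact hMatch f hfM g hgM hne
  have hU'' : M''.biUnion id = insert a (insert b (insert c U)) := by
    ext x
    simp only [hM''def, Finset.mem_biUnion, Finset.mem_insert, Finset.mem_erase, id]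
    constructor
    · rintro ⟨f, hf, hx⟩
      rcases hf with rfl | rfl | ⟨hfe, hfM⟩
      · rw [he1def] at hx; simp at hx
        rcases hx with rfl | rfl | rfl
        · exact Or.inr (Or.inr (Or.inr hu_U))
        · exact Or.inl rfl
        · exact Or.inr (Or.inl rfl)
      · rw [he2def] at hx; simp at hx
        rcases hx with rfl | rfl | rfl
        · exact Or.inr (Or.inr (Or.inr hv_U))
        · exact Or.inr (Or.inr (Or.inr hw_U))
        · exact Or.inr (Or.inr (Or.inl rfl))
      · exact Or.inr (Or.inr (Or.inr (Finset.mem_biUnion.mpr ⟨f, hfM, hx⟩)))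
    · rintro (rfl | rfl | rfl | hxU)
      · exact ⟨e1, Or.inl rfl, ha_e1⟩
      · exact ⟨e1, Or.inl rfl, hb_e1⟩
      · exact ⟨e2, Or.inr (Or.inl rfl), hc_e2⟩
      · obtain ⟨f, hfM, hxf⟩ := Finset.mem_biUnion.mp hxU
        by_cases hfe : f = e
        · subst hfe
          rcases he_sub x hxf with rfl | rfl | rfl
          · exact ⟨e1, Or.inl rfl, hu_e1⟩
          · exact ⟨e2, Or.inr (Or.inl rfl), hv_e2⟩
          · exact ⟨e2, Or.inr (Or.inl rfl), hw_e2⟩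
        · exact ⟨f, Or.inr (Or.inr ⟨hfe, hfM⟩), hxf⟩
  have hcardU'' : (M''.biUnion id).card = U.card + 3 := by
    have hbc : b ≠ c := fun h => hcb h.symm
    have hac : a ≠ c := fun h => hca h.symm
    have hnc : c ∉ U := hc_nU
    have hnb : b ∉ insert c U := by simp [hb_nU, hbc]
    have hna : a ∉ insert b (insert c U) := by simp [ha_nU, hab, hac]
    rw [hU'', Finset.card_insert_of_notMem hna, Finset.card_insert_of_notMem hnb,
      Finset.card_insert_of_notMem hnc]
  have he_nred : e ∉ Mred := fun h =>
    Finset.disjoint_left.mp hdisj (hRsub (hMred h)) (hBsub heB)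
  -- apply maximality in four cases
  have hfinal : (M''.biUnion id).card ≤ U.card := by
    rcases he1RB with h1R | h1B <;> rcases he2RB with h2R | h2B
    · have hun : insert e1 (insert e2 Mred) ∪ Mblue.erase e = M'' := by
        ext g
        simp only [hM''def, hM, Finset.mem_union, Finset.mem_insert, Finset.mem_erase]
        have hge : g ∈ Mred → g ≠ e := fun h h' => he_nred (h' ▸ h)
        constructor
        · rintro ((rfl | rfl | h) | ⟨hne, h⟩)
          · exact Or.inl rfl
          · exact Or.inr (Or.inl rfl)
          · exact Or.inr (Or.inr ⟨hge h, Or.inl h⟩)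
          · exact Or.inr (Or.inr ⟨hne, Or.inr h⟩)
        · rintro (rfl | rfl | ⟨hne, h | h⟩)
          · exact Or.inl (Or.inl rfl)
          · exact Or.inl (Or.inr (Or.inl rfl))
          · exact Or.inl (Or.inr (Or.inr h))
          · exact Or.inr ⟨hne, h⟩
      have := hmax (insert e1 (insert e2 Mred)) (Mblue.erase e)
        (Finset.insert_subset h1R (Finset.insert_subset h2R hMred))
        ((Finset.erase_subset _ _).trans hMblue)
        (by rw [hun]; exact hM'')
      rwa [hun] at this
    · have hun : insert e1 Mred ∪ insert e2 (Mblue.erase e) = M'' := by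
        ext g
        simp only [hM''def, hM, Finset.mem_union, Finset.mem_insert, Finset.mem_erase]
        have hge : g ∈ Mred → g ≠ e := fun h h' => he_nred (h' ▸ h)
        constructor
        · rintro ((rfl | h) | (rfl | ⟨hne, h⟩))
          · exact Or.inl rfl
          · exact Or.inr (Or.inr ⟨hge h, Or.inl h⟩)
          · exact Or.inr (Or.inl rfl)
          · exact Or.inr (Or.inr ⟨hne, Or.inr h⟩)
        · rintro (rfl | rfl | ⟨hne, h | h⟩)
          · exact Or.inl (Or.inl rfl)
          · exact Or.inr (Or.inl rfl)
          · exact Or.inl (Or.inr h)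
          · exact Or.inr (Or.inr ⟨hne, h⟩)
      have := hmax (insert e1 Mred) (insert e2 (Mblue.erase e))
        (Finset.insert_subset h1R hMred)
        (Finset.insert_subset h2B ((Finset.erase_subset _ _).trans hMblue))
        (by rw [hun]; exact hM'')
      rwa [hun] at this
    · have hun : insert e2 Mred ∪ insert e1 (Mblue.erase e) = M'' := by
        ext g
        simp only [hM''def, hM, Finset.mem_union, Finset.mem_insert, Finset.mem_erase]
        have hge : g ∈ Mred → g ≠ e := fun h h' => he_nred (h' ▸ h)
        constructor
        · rintro ((rfl | h) | (rfl | ⟨hne, h⟩))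
          · exact Or.inr (Or.inl rfl)
          · exact Or.inr (Or.inr ⟨hge h, Or.inl h⟩)
          · exact Or.inl rfl
          · exact Or.inr (Or.inr ⟨hne, Or.inr h⟩)
        · rintro (rfl | rfl | ⟨hne, h | h⟩)
          · exact Or.inr (Or.inl rfl)
          · exact Or.inl (Or.inl rfl)
          · exact Or.inl (Or.inr h)
          · exact Or.inr (Or.inr ⟨hne, h⟩)
      have := hmax (insert e2 Mred) (insert e1 (Mblue.erase e))
        (Finset.insert_subset h2R hMred)
        (Finset.insert_subset h1B ((Finset.erase_subset _ _).trans hMblue))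
        (by rw [hun]; exact hM'')
      rwa [hun] at this
    · have hun : Mred ∪ insert e1 (insert e2 (Mblue.erase e)) = M'' := by
        ext g
        simp only [hM''def, hM, Finset.mem_union, Finset.mem_insert, Finset.mem_erase]
        have hge : g ∈ Mred → g ≠ e := fun h h' => he_nred (h' ▸ h)
        constructor
        · rintro (h | (rfl | rfl | ⟨hne, h⟩))
          · exact Or.inr (Or.inr ⟨hge h, Or.inl h⟩)
          · exact Or.inl rfl
          · exact Or.inr (Or.inl rfl)
          · exact Or.inr (Or.inr ⟨hne, Or.inr h⟩)
        · rintro (rfl | rfl | ⟨hne, h | h⟩)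
          · exact Or.inr (Or.inl rfl)
          · exact Or.inr (Or.inr (Or.inl rfl))
          · exact Or.inl h
          · exact Or.inr (Or.inr (Or.inr ⟨hne, h⟩))
      have := hmax Mred (insert e1 (insert e2 (Mblue.erase e)))
        hMred
        (Finset.insert_subset h1B (Finset.insert_subset h2B ((Finset.erase_subset _ _).trans hMblue)))
        (by rw [hun]; exact hM'')
      rwa [hun] at this
  omega
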